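/- arXiv:2411.19881 — 2 statements merged into one kernel-verified Lean document; each statement's English description precedes it below -/
import Mathlib

section
/- For any fair division instance with two agents having identical valuations v: 2^M → ℤ where v(S) ∈ {0, a, b} for negative integers a > b, if an EF1 allocation exists for the instance obtained by replacing values a with 1, b with 2, and 0 with 0, then an EF1 allocation exists for the original instance. -/
open Finset

/-- EF1 for an allocation among `n` agents with a common valuation `v`. -/
def EF1Id {M : Type*} [DecidableEq M] {n : ℕ} (v : Finset M → ℤ)
    (A : Fin n → Finset M) : Prop :=
  ∀ i j, v (A i) < v (A j) →
    ∃ x ∈ A i ∪ A j, v ((A i).erase x) ≥ v ((A j).erase x)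

/-- An allocation is a partition of the items. -/
def IsPartition {M : Type*} [DecidableEq M] [Fintype M] {n : ℕ}
    (A : Fin n → Finset M) : Prop :=
  (∀ i j, i ≠ j → Disjoint (A i) (A j)) ∧ (Finset.univ.biUnion A = Finset.univ)

theorem stmt0 {M : Type*} [DecidableEq M] [Fintype M]
    (v : Finset M → ℤ) (a b : ℤ) (ha : a < 0) (hb : b < 0) (hab : b < a)
    (hrange : ∀ S : Finset M, v S = 0 ∨ v S = a ∨ v S = b)
    (v' : Finset M → ℤ)
    (hv' : ∀ S : Finset M,
      v' S = if v S = a then 1 else if v S = b then 2 else 0)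
    (hEF1' : ∃ A : Fin 2 → Finset M, IsPartition A ∧ EF1Id v' A) :
    ∃ A : Fin 2 → Finset M, IsPartition A ∧ EF1Id v A := by
  have key : ∀ S T : Finset M, v S < v T ↔ v' T < v' S := by
    intro S T
    rw [hv' S, hv' T]
    rcases hrange S with h1 | h1 | h1 <;> rcases hrange T with h2 | h2 | h2 <;>
      rw [h1, h2] <;> split_ifs <;> omega
  obtain ⟨A, hpart, hEF1⟩ := hEF1'
  refine ⟨A, hpart, fun i j hij => ?_⟩
  obtain ⟨x, hx, hx2⟩ := hEF1 j i ((key _ _).mp hij)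
  refine ⟨x, by rwa [Finset.union_comm] at hx, ?_⟩
  exact not_lt.mp (fun h => absurd ((key _ _).mp h) (not_lt.mpr hx2))
end

section
/- Resolving a top-trading envy cycle preserves EF1: if A is an EF1 allocation and C is a directed cycle in the top-trading envy graph T_A, then the cycle-swapped allocation A^C is EF1, and moreover no agent in C envies any other agent in A^C. -/
open Finset

/-- EF1 for an allocation among agents `N` with valuations `v i`. -/
def EF1 {M : Type*} [DecidableEq M] {N : Type*} (v : N → Finset M → ℤ)
    (A : N → Finset M) : Prop :=
  ∀ i j, v i (A i) < v i (A j) →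
    ∃ x ∈ A i ∪ A j, v i ((A i).erase x) ≥ v i ((A j).erase x)

theorem stmt12 {M : Type*} [DecidableEq M] {N : Type*}
    (v : N → Finset M → ℤ) (A : N → Finset M)
    (σ : Equiv.Perm N) (hcyc : σ.IsCycle)
    -- every agent moved by the cycle points to her most-preferred bundle,
    -- which she strictly prefers to her own:
    (htop : ∀ i, σ i ≠ i →
      (∀ j, v i (A (σ i)) ≥ v i (A j)) ∧ v i (A (σ i)) > v i (A i))
    (hEF1 : EF1 v A) :
    EF1 v (fun i => A (σ i)) ∧
    (∀ i, σ i ≠ i → ∀ j, v i (A (σ i)) ≥ v i (A (σ j))) := by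
  constructor
  · intro i j hlt
    by_cases h : σ i = i
    · simp only [h] at hlt ⊢
      exact hEF1 i (σ j) hlt
    · exact absurd hlt (not_lt.mpr ((htop i h).1 (σ j)))
  · intro i h j
    exact (htop i h).1 (σ j)
end
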